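/- Let n ≥ 2 and let σ, τ be wire diagrams on n wires with σ ≤ τ in P_n^* (equivalently, τ ≤ σ in P_n). Then S(σ) ≤lex S(τ). -/

import Mathlib

open Equiv Finset

/-- A candidate wire diagram: a permutation of the `2 n` endpoint positions. -/
abbrev WDperm (n : ℕ) := Equiv.Perm (Fin (2 * n))

/-- `σ` is a wire diagram on `n` wires: a fixed-point-free involution of the `2 n` positions. -/
def IsWD {n : ℕ} (σ : WDperm n) : Prop := (∀ x, σ (σ x) = x) ∧ ∀ x, σ x ≠ x

instance IsWD.decPred {n : ℕ} : DecidablePred (@IsWD n) := fun σ => by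
  unfold IsWD; infer_instance

/-- Positions `a < c` are first endpoints of a pair of crossing wires `{a, σ a}`, `{c, σ c}`,
i.e. `a < c < σ a < σ c`. -/
def IsCrossing {n : ℕ} (σ : WDperm n) (a c : Fin (2 * n)) : Prop :=
  a < c ∧ c < σ a ∧ σ a < σ c

instance IsCrossing.dec {n : ℕ} (σ : WDperm n) (a c : Fin (2 * n)) :
    Decidable (IsCrossing σ a c) := by unfold IsCrossing; infer_instance

/-- The number `c(σ)` of crossings of `σ`. -/
def ncross {n : ℕ} (σ : WDperm n) : ℕ :=
  (Finset.univ.filter (fun p : Fin (2 * n) × Fin (2 * n) => IsCrossing σ p.1 p.2)).card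

/-- The nesting uncrossing of the crossing `{a, σ a}, {c, σ c}` (with `a < c < σ a < σ c`):
replace the pairs `{a,b},{c,d}` by `{a,d},{b,c}` where `b = σ a`, `d = σ c`. -/
def nestU {n : ℕ} (σ : WDperm n) (a c : Fin (2 * n)) : WDperm n :=
  Equiv.swap (σ a) (σ c) * σ * Equiv.swap (σ a) (σ c)

/-- The disjoint uncrossing: replace the pairs `{a,b},{c,d}` by `{a,c},{b,d}`. -/
def disjU {n : ℕ} (σ : WDperm n) (a c : Fin (2 * n)) : WDperm n :=
  Equiv.swap (σ a) c * σ * Equiv.swap (σ a) c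

/-- `τ` is obtained from `σ` by a nesting uncrossing of some crossing of `σ`. -/
def IsNestStep {n : ℕ} (σ τ : WDperm n) : Prop := ∃ a c, IsCrossing σ a c ∧ τ = nestU σ a c

/-- `τ` is obtained from `σ` by a disjoint uncrossing of some crossing of `σ`. -/
def IsDisjStep {n : ℕ} (σ τ : WDperm n) : Prop := ∃ a c, IsCrossing σ a c ∧ τ = disjU σ a c

/-- `τ` is obtained from `σ` by an uncrossing step that decreases the crossing number by one. -/
def UncCov {n : ℕ} (σ τ : WDperm n) : Prop :=
  (IsNestStep σ τ ∨ IsDisjStep σ τ) ∧ ncross τ + 1 = ncross σ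

/-- The dual uncrossing poset `P_n^*`: wire diagrams together with a top element `none = 1̂`
(the adjoined element `0̂` of `P_n`). -/
abbrev PStar (n : ℕ) := Option {σ : WDperm n // IsWD σ}

/-- The covering relation of `P_n^*`. -/
def Cov {n : ℕ} : PStar n → PStar n → Prop
  | some σ, some τ => UncCov σ.1 τ.1
  | some σ, none => ncross σ.1 = 0
  | none, _ => False

/-- The partial order of `P_n^*`: reflexive-transitive closure of the covering relation. -/
def ple {n : ℕ} : PStar n → PStar n → Prop := Relation.ReflTransGen Cov

/-- The (0-indexed) name `w(σ)(x)` of the wire through position `x`: the number of wires whose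
first endpoint is strictly smaller than the first endpoint of the wire through `x`. -/
def word {n : ℕ} (σ : WDperm n) (x : Fin (2 * n)) : ℕ :=
  (Finset.univ.filter (fun a : Fin (2 * n) => a < σ a ∧ a < min x (σ x))).card

/-- The start set `S(σ)`: the set of first endpoints of wires of `σ`. -/
def startSet {n : ℕ} (σ : WDperm n) : Finset (Fin (2 * n)) :=
  Finset.univ.filter (fun a => a < σ a)

/-- The noncrossing pair set `N(σ)` (on 0-indexed wire names): `(i, j)` with `i < j` for each
nested pair of wires `i < j`, and `(j, i)` for each disjoint pair of wires `i < j`. -/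
def NPairs {n : ℕ} (σ : WDperm n) : Set (ℕ × ℕ) :=
  {p | ∃ a c : Fin (2 * n), a < σ a ∧ c < σ c ∧ a < c ∧
        ((σ c < σ a ∧ p = (word σ a, word σ c)) ∨ (σ a < c ∧ p = (word σ c, word σ a)))}

/-- Lexicographic comparison of finsets via their increasing enumerations. -/
def finsetLexLE {m : ℕ} (A B : Finset (Fin m)) : Prop :=
  A = B ∨ List.Lex (· < ·) (A.sort (· ≤ ·)) (B.sort (· ≤ ·))

/-- Labels of the edge labeling: ordered pairs of (0-indexed) wire names, and a label `L`. -/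
inductive Lbl where
  | pair : ℕ → ℕ → Lbl
  | L : Lbl
deriving DecidableEq

/-- The total order `<λ` on labels. -/
def lblLT : Lbl → Lbl → Prop
  | .pair i j, .pair i' j' =>
      if i < j then (if i' < j' then i < i' ∨ (i = i' ∧ j < j') else True)
      else (if i' < j' then False else (j' < j ∨ (j = j' ∧ i' < i)))
  | .pair i j, .L => i < j
  | .L, .pair r s => s < r
  | .L, .L => False

/-- `≤λ` on labels. -/
def lblLE (p q : Lbl) : Prop := p = q ∨ lblLT p q

/-- The sorted list of positions where `σ` and `τ` differ. -/
def diffList {n : ℕ} (σ τ : WDperm n) : List (Fin (2 * n)) :=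
  (Finset.univ.filter (fun x => σ x ≠ τ x)).sort (· ≤ ·)

/-- The edge labeling `λ` of `P_n^*`: an uncrossing of the crossing formed by wires `k < m`
of the lower diagram gets label `(k, m)` if it is the nesting uncrossing and `(m, k)` if it is
the disjoint uncrossing; covers of the top element `1̂ = none` get the label `L`. -/
def lbl {n : ℕ} : PStar n → PStar n → Lbl
  | some σ, some τ =>
      match (diffList σ.1 τ.1)[0]?, (diffList σ.1 τ.1)[1]? with
      | some a, some c =>
          if τ.1 a = σ.1 c then Lbl.pair (word σ.1 a) (word σ.1 c)
          else Lbl.pair (word σ.1 c) (word σ.1 a)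
      | _, _ => Lbl.L
  | _, _ => Lbl.L

/-- `c` is a saturated chain from `u` to `v` in `P_n^*`. -/
def SatChain {n : ℕ} (c : List (PStar n)) (u v : PStar n) : Prop :=
  c.Chain' Cov ∧ c.head? = some u ∧ c.getLast? = some v

/-- The label sequence of a saturated chain. -/
def chainLabels {n : ℕ} (c : List (PStar n)) : List Lbl := c.zipWith lbl c.tail

/-- Lexicographic order on pairs of labels. -/
def pairLexLT (p q : Lbl × Lbl) : Prop := lblLT p.1 q.1 ∨ (p.1 = q.1 ∧ lblLT p.2 q.2)

/-- `x ⋖ y ⋖ z` is a topological ascent: its label pair is lexicographically strictly smaller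
than the label pair of every other saturated chain from `x` to `z`. -/
def TopAscent {n : ℕ} (x y z : PStar n) : Prop :=
  Cov x y ∧ Cov y z ∧ ∀ y' : PStar n, Cov x y' → Cov y' z → y' ≠ y →
    pairLexLT (lbl x y, lbl y z) (lbl x y', lbl y' z)

/-- `x ⋖ y ⋖ z` is a topological descent: a length-two chain that is not a topological ascent. -/
def TopDescent {n : ℕ} (x y z : PStar n) : Prop := Cov x y ∧ Cov y z ∧ ¬ TopAscent x y z

/-- Every length-two subchain of `c` is a topological ascent. -/
def AllTopAscents {n : ℕ} (c : List (PStar n)) : Prop :=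
  ∀ x y z : PStar n, [x, y, z] <:+: c → TopAscent x y z

/-- The number of inversions of a permutation. -/
def numInv {n : ℕ} (π : Equiv.Perm (Fin n)) : ℕ :=
  (Finset.univ.filter (fun p : Fin n × Fin n => p.1 < p.2 ∧ π p.2 < π p.1)).card

/-- One step of the Bruhat order: left multiplication by a transposition raising `inv` by one. -/
def BruhatStep {n : ℕ} (u v : Equiv.Perm (Fin n)) : Prop :=
  (∃ a b : Fin n, a ≠ b ∧ v = Equiv.swap a b * u) ∧ numInv v = numInv u + 1

/-- The Bruhat order on `S_n`. -/
def BruhatLE {n : ℕ} : Equiv.Perm (Fin n) → Equiv.Perm (Fin n) → Prop :=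
  Relation.ReflTransGen BruhatStep

/-- The set of second endpoints of wires of `σ`. -/
def secondEnds {n : ℕ} (σ : WDperm n) : Finset (Fin (2 * n)) :=
  Finset.univ.filter (fun b => σ b < b)

/-- The wire name at the `t`-th (0-indexed) second endpoint. -/
def piVal {n : ℕ} (σ : WDperm n) (t : ℕ) : ℕ :=
  (((secondEnds σ).sort (· ≤ ·))[t]?).elim 0 (word σ)

open Classical in
/-- The permutation `π(σ) ∈ S_n` reading the wire names at the second endpoints of `σ` in
increasing order of position. -/
noncomputable def piPerm {n : ℕ} (σ : WDperm n) : Equiv.Perm (Fin n) :=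
  if h : Function.Bijective (fun t : Fin n =>
      if ht : piVal σ (t : ℕ) < n then (⟨piVal σ (t : ℕ), ht⟩ : Fin n) else t)
  then Equiv.ofBijective _ h else 1

/-- Apply to the crossing at `(a, c)` the nesting (`nest = true`) or disjoint (`nest = false`)
uncrossing. -/
def uncrossAt {n : ℕ} (σ : WDperm n) (a c : Fin (2 * n)) (nest : Bool) : WDperm n :=
  if nest then nestU σ a c else disjU σ a c

section AuxStartLex

/-- Key lexicographic lemma: if two strictly sorted lists of the same length agree below `m`,
and `m` belongs to the first but not the second, then the first is lexicographically smaller. -/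
lemma lex_aux {α : Type*} [LinearOrder α] :
    ∀ (l₁ l₂ : List α) (m : α), l₁.Pairwise (· < ·) → l₂.Pairwise (· < ·) →
      l₁.length = l₂.length → m ∈ l₁ → m ∉ l₂ →
      (∀ x, x < m → (x ∈ l₁ ↔ x ∈ l₂)) → List.Lex (· < ·) l₁ l₂ := by
  intro l₁
  induction l₁ with
  | nil => intro l₂ m _ _ _ hm _ _; cases hm
  | cons x xs ih =>
    intro l₂ m h1 h2 hlen hm hm2 hlow
    cases l₂ with
    | nil => simp at hlen
    | cons y ys =>
      obtain ⟨hx, h1'⟩ := List.pairwise_cons.mp h1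
      obtain ⟨hy, h2'⟩ := List.pairwise_cons.mp h2
      rcases eq_or_ne x y with rfl | hxy
      · have hmx : m ≠ x := fun h => hm2 (h ▸ List.mem_cons_self (a := x) (l := ys))
        have hmxs : m ∈ xs := (List.mem_cons.mp hm).resolve_left hmx
        have hm2' : m ∉ ys := fun h => hm2 (List.mem_cons_of_mem _ h)
        refine List.Lex.cons (ih ys m h1' h2' (by simpa using hlen) hmxs hm2' ?_)
        intro z hz
        constructor
        · intro hzxs
          have hzx : x < z := hx z hzxs
          have : z ∈ x :: ys := (hlow z hz).mp (List.mem_cons_of_mem _ hzxs)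
          rcases List.mem_cons.mp this with rfl | h
          · exact absurd hzx (lt_irrefl _)
          · exact h
        · intro hzys
          have hzy : x < z := hy z hzys
          have : z ∈ x :: xs := (hlow z hz).mpr (List.mem_cons_of_mem _ hzys)
          rcases List.mem_cons.mp this with rfl | h
          · exact absurd hzy (lt_irrefl _)
          · exact h
      · have hxltY : x < y := by
          rcases List.mem_cons.mp hm with rfl | hmxs
          · rcases lt_trichotomy y m with hyx | rfl | hxy'
            · have hyl1 : y ∈ m :: xs := (hlow y hyx).mpr (List.mem_cons_self (a := y) (l := ys))
              rcases List.mem_cons.mp hyl1 with rfl | h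
              · exact absurd rfl hxy
              · exact absurd (hx y h) (lt_asymm hyx)
            · exact absurd (List.mem_cons_self (a := y) (l := ys)) hm2
            · exact hxy'
          · have hxm : x < m := hx m hmxs
            have hxl2 : x ∈ y :: ys := (hlow x hxm).mp (List.mem_cons_self (a := x) (l := xs))
            rcases List.mem_cons.mp hxl2 with h | h
            · exact absurd h hxy
            · have hyx : y < x := hy x h
              have hyl1 : y ∈ x :: xs := (hlow y (hyx.trans hxm)).mpr (List.mem_cons_self (a := y) (l := ys))
              rcases List.mem_cons.mp hyl1 with rfl | h'
              · exact absurd hyx (lt_irrefl _)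
              · exact absurd (hx y h') (lt_asymm hyx)
        exact List.Lex.rel hxltY

lemma finsetLexLE_of_aux {m : ℕ} {A B : Finset (Fin m)} (c : Fin m)
    (hcA : c ∈ A) (hcB : c ∉ B) (hcard : A.card = B.card)
    (hlow : ∀ x, x < c → (x ∈ A ↔ x ∈ B)) : finsetLexLE A B := by
  refine Or.inr (lex_aux _ _ c (Finset.sortedLT_sort A).pairwise (Finset.sortedLT_sort B).pairwise ?_ ?_ ?_ ?_)
  · simp [Finset.length_sort, hcard]
  · simpa [Finset.mem_sort] using hcA
  · simpa [Finset.mem_sort] using hcB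
  · intro x hx; simpa [Finset.mem_sort] using hlow x hx

lemma finsetLexLE_trans {m : ℕ} {A B C : Finset (Fin m)}
    (h1 : finsetLexLE A B) (h2 : finsetLexLE B C) : finsetLexLE A C := by
  rcases h1 with rfl | h1
  · exact h2
  · rcases h2 with rfl | h2
    · exact Or.inr h1
    · exact Or.inr (List.lex_trans lt_trans h1 h2)

/-- An uncrossing step weakly increases the start set lexicographically. -/
lemma uncov_lex {n : ℕ} (σ τ : WDperm n) (hσ : IsWD σ)
    (h : IsNestStep σ τ ∨ IsDisjStep σ τ) :
    finsetLexLE (startSet σ) (startSet τ) := by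
  obtain ⟨hinv, _⟩ := hσ
  have hinj : Function.Injective σ := σ.injective
  rcases h with ⟨a, c, ⟨hac, hcb, hbd⟩, rfl⟩ | ⟨a, c, ⟨hac, hcb, hbd⟩, rfl⟩
  · -- nesting uncrossing: start set unchanged
    have ha_b : a < σ a := hac.trans hcb
    have ha_d : a < σ c := ha_b.trans hbd
    have hc_d : c < σ c := hcb.trans hbd
    have swapne : ∀ z, z ≠ σ a → z ≠ σ c → Equiv.swap (σ a) (σ c) z = z :=
      fun z h1 h2 => Equiv.swap_apply_of_ne_of_ne h1 h2
    have hA : nestU σ a c a = σ c := by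
      simp [nestU, Equiv.Perm.mul_apply, swapne a (ne_of_lt ha_b) (ne_of_lt ha_d),
        Equiv.swap_apply_left]
    have hC : nestU σ a c c = σ a := by
      simp [nestU, Equiv.Perm.mul_apply, swapne c (ne_of_lt hcb) (ne_of_lt hc_d),
        Equiv.swap_apply_right]
    have hB : nestU σ a c (σ a) = c := by
      simp [nestU, Equiv.Perm.mul_apply, Equiv.swap_apply_left, hinv c,
        swapne c (ne_of_lt hcb) (ne_of_lt hc_d)]
    have hD : nestU σ a c (σ c) = a := by
      simp [nestU, Equiv.Perm.mul_apply, Equiv.swap_apply_right, hinv a,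
        swapne a (ne_of_lt ha_b) (ne_of_lt ha_d)]
    have hOther : ∀ x, x ≠ a → x ≠ c → x ≠ σ a → x ≠ σ c → nestU σ a c x = σ x := by
      intro x hxa hxc hxb hxd
      have h1 : σ x ≠ σ a := fun h => hxa (hinj h)
      have h2 : σ x ≠ σ c := fun h => hxc (hinj h)
      simp [nestU, Equiv.Perm.mul_apply, swapne x hxb hxd, swapne _ h1 h2]
    left
    ext x
    simp only [startSet, Finset.mem_filter, Finset.mem_univ, true_and]
    rcases eq_or_ne x a with rfl | hxa
    · rw [hA]; exact iff_of_true ha_b ha_d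
    rcases eq_or_ne x c with rfl | hxc
    · rw [hC]; exact iff_of_true hc_d hcb
    rcases eq_or_ne x (σ a) with rfl | hxb
    · rw [hB, hinv a]; exact iff_of_false (lt_asymm ha_b) (lt_asymm hcb)
    rcases eq_or_ne x (σ c) with rfl | hxd
    · rw [hD, hinv c]; exact iff_of_false (lt_asymm hc_d) (lt_asymm ha_d)
    · rw [hOther x hxa hxc hxb hxd]
  · -- disjoint uncrossing: the first endpoint `c` is replaced by `σ a > c`
    have ha_b : a < σ a := hac.trans hcb
    have ha_d : a < σ c := ha_b.trans hbd
    have hc_d : c < σ c := hcb.trans hbd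
    have swapne : ∀ z, z ≠ σ a → z ≠ c → Equiv.swap (σ a) c z = z :=
      fun z h1 h2 => Equiv.swap_apply_of_ne_of_ne h1 h2
    have hane : a ≠ σ a := ne_of_lt ha_b
    have hanc : a ≠ c := ne_of_lt hac
    have hdne : σ c ≠ σ a := (ne_of_lt hbd).symm
    have hdnc : σ c ≠ c := (ne_of_lt hc_d).symm
    have hA : disjU σ a c a = c := by
      simp [disjU, Equiv.Perm.mul_apply, swapne a hane hanc, Equiv.swap_apply_left]
    have hC : disjU σ a c c = a := by
      simp [disjU, Equiv.Perm.mul_apply, Equiv.swap_apply_right, hinv a, swapne a hane hanc]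
    have hB : disjU σ a c (σ a) = σ c := by
      simp [disjU, Equiv.Perm.mul_apply, Equiv.swap_apply_left, hinv c, swapne _ hdne hdnc]
    have hD : disjU σ a c (σ c) = σ a := by
      simp [disjU, Equiv.Perm.mul_apply, swapne _ hdne hdnc, hinv c, Equiv.swap_apply_right]
    have hOther : ∀ x, x ≠ a → x ≠ c → x ≠ σ a → x ≠ σ c → disjU σ a c x = σ x := by
      intro x hxa hxc hxb hxd
      have h1 : σ x ≠ σ a := fun h => hxa (hinj h)
      have h2 : σ x ≠ c := fun h => hxd (by rw [← hinv x, h])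
      simp [disjU, Equiv.Perm.mul_apply, swapne x hxb hxc, swapne _ h1 h2]
    have hbnotA : σ a ∉ startSet σ := by
      simp only [startSet, Finset.mem_filter, Finset.mem_univ, true_and, hinv a]
      exact lt_asymm ha_b
    have hcA : c ∈ startSet σ := by
      simp only [startSet, Finset.mem_filter, Finset.mem_univ, true_and]; exact hc_d
    have hset : startSet (disjU σ a c) = insert (σ a) ((startSet σ).erase c) := by
      ext x
      simp only [startSet, Finset.mem_filter, Finset.mem_univ, true_and, Finset.mem_insert,
        Finset.mem_erase]
      rcases eq_or_ne x a with rfl | hxa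
      · rw [hA]
        exact iff_of_true hac (Or.inr ⟨hanc, ha_b⟩)
      rcases eq_or_ne x c with rfl | hxc
      · rw [hC]
        constructor
        · intro h; exact absurd h (lt_asymm hac)
        · rintro (h | ⟨h, _⟩)
          · exact absurd h (ne_of_lt hcb)
          · exact absurd rfl h
      rcases eq_or_ne x (σ a) with rfl | hxb
      · rw [hB]
        exact iff_of_true hbd (Or.inl rfl)
      rcases eq_or_ne x (σ c) with rfl | hxd
      · rw [hD]
        constructor
        · intro h; exact absurd h (lt_asymm hbd)
        · rintro (h | ⟨_, h⟩)
          · exact absurd h hdne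
          · rw [hinv c] at h; exact absurd h (lt_asymm hc_d)
      · rw [hOther x hxa hxc hxb hxd]
        constructor
        · intro h; exact Or.inr ⟨hxc, h⟩
        · rintro (h | ⟨_, h⟩)
          · exact absurd h hxb
          · exact h
    refine finsetLexLE_of_aux c hcA ?_ ?_ ?_
    · rw [hset]
      simp only [Finset.mem_insert, Finset.mem_erase]
      rintro (h | ⟨h, _⟩)
      · exact absurd h (ne_of_lt hcb)
      · exact absurd rfl h
    · rw [hset, Finset.card_insert_of_notMem (fun h => hbnotA (Finset.mem_of_mem_erase h)),
        Finset.card_erase_of_mem hcA,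
        Nat.sub_add_cancel (Finset.card_pos.mpr ⟨c, hcA⟩)]
    · intro x hx
      rw [hset]
      simp only [Finset.mem_insert, Finset.mem_erase]
      constructor
      · intro h; exact Or.inr ⟨ne_of_lt hx, h⟩
      · rintro (h | ⟨_, h⟩)
        · exact absurd h (ne_of_lt (hx.trans hcb))
        · exact h

end AuxStartLex

/-- If `σ ≤ τ` in `P_n^*` then `S(σ) ≤lex S(τ)`. -/
theorem startSet_lex_monotone (n : ℕ) (hn : 2 ≤ n) (σ τ : {σ : WDperm n // IsWD σ})
    (h : ple (some σ) (some τ)) :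
    finsetLexLE (startSet σ.1) (startSet τ.1) := by
  suffices H : ∀ (y : PStar n), ple (some σ) y →
      ∀ t : {σ : WDperm n // IsWD σ}, y = some t →
        finsetLexLE (startSet σ.1) (startSet t.1) from H (some τ) h τ rfl
  intro y hy
  induction hy with
  | refl =>
    intro t ht
    obtain rfl : σ = t := Option.some.inj ht
    exact Or.inl rfl
  | @tail b c hab hbc ih =>
    rintro t rfl
    cases b with
    | none => exact absurd hbc (fun h => h)
    | some ρ =>
      have hstep : UncCov ρ.1 t.1 := hbc
      exact finsetLexLE_trans (ih ρ rfl) (uncov_lex ρ.1 t.1 ρ.2 hstep.1)
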